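/- Let o_A be a nonzero spinor and set κ_{AB} = o_A o_B. If Ψ_{ABCD} ∈ Sym⁴ is a totally symmetric four-index spinor satisfying Ψ_{(ABC}{}^F κ_{D)F} = 0, then there exists a scalar ψ ∈ ℂ such that Ψ_{ABCD} = ψ o_A o_B o_C o_D (i.e. Ψ is of type N with quadruple principal spinor o). -/

import Mathlib

open scoped BigOperators

noncomputable section

/-- One-index spinors (lower index): elements of S = ℂ². -/
abbrev Spinor := Fin 2 → ℂ

/-- Two-index spinors. -/
abbrev Spinor2 := Fin 2 → Fin 2 → ℂ

/-- Four-index spinors. -/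
abbrev Spinor4 := Fin 2 → Fin 2 → Fin 2 → Fin 2 → ℂ

/-- The alternating spinor ε_{AB}, normalized by ε₀₁ = 1; the raised version
ε^{AB} has the same components. -/
def eps : Fin 2 → Fin 2 → ℂ := fun A B =>
  if A = 0 ∧ B = 1 then 1 else if A = 1 ∧ B = 0 then -1 else 0

/-- Index raising on one-index spinors: ξ^A = ε^{AB} ξ_B. -/
def up1 (ξ : Spinor) : Spinor := fun A => ∑ B, eps A B * ξ B

/-- The contraction α_Q β^Q. -/
def contr1 (α β : Spinor) : ℂ := ∑ Q, α Q * up1 β Q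

/-- Index raising on two-index spinors: ζ^{AB} = ε^{AA'} ε^{BB'} ζ_{A'B'}. -/
def up2 (ζ : Spinor2) : Spinor2 := fun A B => ∑ A', ∑ B', eps A A' * eps B B' * ζ A' B'

/-- The contraction ζ_{AB} η^{AB}. -/
def contr2 (ζ η : Spinor2) : ℂ := ∑ A, ∑ B, ζ A B * up2 η A B

/-- Index raising on four-index spinors. -/
def up4 (Ψ : Spinor4) : Spinor4 := fun A B C D =>
  ∑ A', ∑ B', ∑ C', ∑ D', eps A A' * eps B B' * eps C C' * eps D D' * Ψ A' B' C' D'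

/-- The symmetrized product α_{(A} β_{B)}. -/
def symPair (α β : Spinor) : Spinor2 := fun A B => (α A * β B + α B * β A) / 2

/-- Total symmetrization of a four-index object. -/
def sym4 (T : Spinor4) : Spinor4 := fun A B C D =>
  (∑ σ : Equiv.Perm (Fin 4),
    T (![A, B, C, D] (σ 0)) (![A, B, C, D] (σ 1)) (![A, B, C, D] (σ 2)) (![A, B, C, D] (σ 3))) / 24

/-- The symmetrized product α_{(A} α_B β_C β_{D)}. -/
def symAABB (α β : Spinor) : Spinor4 := sym4 (fun A B C D => α A * α B * β C * β D)

/-- Total symmetry of a four-index spinor (membership in Sym⁴). -/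
def TotallySymmetric4 (Ψ : Spinor4) : Prop :=
  ∀ A B C D, Ψ A B C D = Ψ B A C D ∧ Ψ A B C D = Ψ A C B D ∧ Ψ A B C D = Ψ A B D C

/-- The algebraic condition spinor Ψ_{(ABC}{}^F κ_{D)F}, where
Ψ_{ABC}{}^F = ε^{FE} Ψ_{ABCE}. -/
def algCond (Ψ : Spinor4) (κ : Spinor2) : Spinor4 :=
  sym4 (fun A B C D => ∑ F, (∑ E, eps F E * Ψ A B C E) * κ D F)

def pp0 : Equiv.Perm (Fin 4) := ⟨![0,1,2,3], ![0,1,2,3], by decide, by decide⟩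
def pp1 : Equiv.Perm (Fin 4) := ⟨![0,1,3,2], ![0,1,3,2], by decide, by decide⟩
def pp2 : Equiv.Perm (Fin 4) := ⟨![0,2,1,3], ![0,2,1,3], by decide, by decide⟩
def pp3 : Equiv.Perm (Fin 4) := ⟨![0,2,3,1], ![0,3,1,2], by decide, by decide⟩
def pp4 : Equiv.Perm (Fin 4) := ⟨![0,3,1,2], ![0,2,3,1], by decide, by decide⟩
def pp5 : Equiv.Perm (Fin 4) := ⟨![0,3,2,1], ![0,3,2,1], by decide, by decide⟩
def pp6 : Equiv.Perm (Fin 4) := ⟨![1,0,2,3], ![1,0,2,3], by decide, by decide⟩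
def pp7 : Equiv.Perm (Fin 4) := ⟨![1,0,3,2], ![1,0,3,2], by decide, by decide⟩
def pp8 : Equiv.Perm (Fin 4) := ⟨![1,2,0,3], ![2,0,1,3], by decide, by decide⟩
def pp9 : Equiv.Perm (Fin 4) := ⟨![1,2,3,0], ![3,0,1,2], by decide, by decide⟩
def pp10 : Equiv.Perm (Fin 4) := ⟨![1,3,0,2], ![2,0,3,1], by decide, by decide⟩
def pp11 : Equiv.Perm (Fin 4) := ⟨![1,3,2,0], ![3,0,2,1], by decide, by decide⟩
def pp12 : Equiv.Perm (Fin 4) := ⟨![2,0,1,3], ![1,2,0,3], by decide, by decide⟩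
def pp13 : Equiv.Perm (Fin 4) := ⟨![2,0,3,1], ![1,3,0,2], by decide, by decide⟩
def pp14 : Equiv.Perm (Fin 4) := ⟨![2,1,0,3], ![2,1,0,3], by decide, by decide⟩
def pp15 : Equiv.Perm (Fin 4) := ⟨![2,1,3,0], ![3,1,0,2], by decide, by decide⟩
def pp16 : Equiv.Perm (Fin 4) := ⟨![2,3,0,1], ![2,3,0,1], by decide, by decide⟩
def pp17 : Equiv.Perm (Fin 4) := ⟨![2,3,1,0], ![3,2,0,1], by decide, by decide⟩
def pp18 : Equiv.Perm (Fin 4) := ⟨![3,0,1,2], ![1,2,3,0], by decide, by decide⟩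
def pp19 : Equiv.Perm (Fin 4) := ⟨![3,0,2,1], ![1,3,2,0], by decide, by decide⟩
def pp20 : Equiv.Perm (Fin 4) := ⟨![3,1,0,2], ![2,1,3,0], by decide, by decide⟩
def pp21 : Equiv.Perm (Fin 4) := ⟨![3,1,2,0], ![3,1,2,0], by decide, by decide⟩
def pp22 : Equiv.Perm (Fin 4) := ⟨![3,2,0,1], ![2,3,1,0], by decide, by decide⟩
def pp23 : Equiv.Perm (Fin 4) := ⟨![3,2,1,0], ![3,2,1,0], by decide, by decide⟩

lemma perm4_univ : (Finset.univ : Finset (Equiv.Perm (Fin 4))) = ⟨↑[pp0,pp1,pp2,pp3,pp4,pp5,pp6,pp7,pp8,pp9,pp10,pp11,pp12,pp13,pp14,pp15,pp16,pp17,pp18,pp19,pp20,pp21,pp22,pp23], by decide⟩ := by decide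

lemma sum_perm4 (g : Fin 4 → Fin 4 → Fin 4 → Fin 4 → ℂ) :
    ∑ σ : Equiv.Perm (Fin 4), g (σ 0) (σ 1) (σ 2) (σ 3) =
      g 0 1 2 3 + g 0 1 3 2 + g 0 2 1 3 + g 0 2 3 1 + g 0 3 1 2 + g 0 3 2 1 + g 1 0 2 3 + g 1 0 3 2 + g 1 2 0 3 + g 1 2 3 0 + g 1 3 0 2 + g 1 3 2 0 + g 2 0 1 3 + g 2 0 3 1 + g 2 1 0 3 + g 2 1 3 0 + g 2 3 0 1 + g 2 3 1 0 + g 3 0 1 2 + g 3 0 2 1 + g 3 1 0 2 + g 3 1 2 0 + g 3 2 0 1 + g 3 2 1 0 := by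
  rw [perm4_univ]
  show (List.map (fun σ : Equiv.Perm (Fin 4) => g (σ 0) (σ 1) (σ 2) (σ 3)) [pp0,pp1,pp2,pp3,pp4,pp5,pp6,pp7,pp8,pp9,pp10,pp11,pp12,pp13,pp14,pp15,pp16,pp17,pp18,pp19,pp20,pp21,pp22,pp23]).sum = _
  simp only [List.map_cons, List.map_nil, List.sum_cons, List.sum_nil, pp0,pp1,pp2,pp3,pp4,pp5,pp6,pp7,pp8,pp9,pp10,pp11,pp12,pp13,pp14,pp15,pp16,pp17,pp18,pp19,pp20,pp21,pp22,pp23, Equiv.coe_fn_mk]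
  norm_num [Matrix.cons_val_zero, Matrix.cons_val_one, Matrix.head_cons,
    Matrix.cons_val_two, Matrix.cons_val_three, Matrix.tail_cons]
  ring

lemma sym4_eval (T : Spinor4) (A B C D : Fin 2) :
    sym4 T A B C D = (T A B C D + T A B D C + T A C B D + T A C D B + T A D B C + T A D C B + T B A C D + T B A D C + T B C A D + T B C D A + T B D A C + T B D C A + T C A B D + T C A D B + T C B A D + T C B D A + T C D A B + T C D B A + T D A B C + T D A C B + T D B A C + T D B C A + T D C A B + T D C B A) / 24 := by
  unfold sym4
  rw [sum_perm4 (fun i j k l => T (![A,B,C,D] i) (![A,B,C,D] j) (![A,B,C,D] k) (![A,B,C,D] l))]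
  norm_num [Matrix.cons_val_zero, Matrix.cons_val_one, Matrix.head_cons,
    Matrix.cons_val_two, Matrix.cons_val_three, Matrix.tail_cons]


set_option maxHeartbeats 2000000 in
/-- if o_A is nonzero, κ_{AB} = o_A o_B, and the totally symmetric
Ψ_{ABCD} satisfies Ψ_{(ABC}{}^F κ_{D)F} = 0, then Ψ_{ABCD} = ψ o_A o_B o_C o_D
for some scalar ψ (type N). -/
theorem typeN_from_algebraic_condition (o : Spinor) (ho : o ≠ 0)
    (κ : Spinor2) (hκ : ∀ A B, κ A B = o A * o B)
    (Ψ : Spinor4) (hsym : TotallySymmetric4 Ψ)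
    (halg : ∀ A B C D, algCond Ψ κ A B C D = 0) :
    ∃ ψ : ℂ, ∀ A B C D, Ψ A B C D = ψ * o A * o B * o C * o D := by

  have t1 : ∀ A B C D, Ψ A B C D = Ψ B A C D := fun A B C D => (hsym A B C D).1
  have t2 : ∀ A B C D, Ψ A B C D = Ψ A C B D := fun A B C D => (hsym A B C D).2.1
  have t3 : ∀ A B C D, Ψ A B C D = Ψ A B D C := fun A B C D => (hsym A B C D).2.2
  have c0010 : Ψ 0 0 1 0 = Ψ 0 0 0 1 := t3 0 0 1 0
  have c0100 : Ψ 0 1 0 0 = Ψ 0 0 0 1 := (t2 0 1 0 0).trans c0010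
  have c1000 : Ψ 1 0 0 0 = Ψ 0 0 0 1 := (t1 1 0 0 0).trans c0100
  have c0101 : Ψ 0 1 0 1 = Ψ 0 0 1 1 := t2 0 1 0 1
  have c0110 : Ψ 0 1 1 0 = Ψ 0 0 1 1 := (t3 0 1 1 0).trans c0101
  have c1001 : Ψ 1 0 0 1 = Ψ 0 0 1 1 := (t1 1 0 0 1).trans c0101
  have c1010 : Ψ 1 0 1 0 = Ψ 0 0 1 1 := (t1 1 0 1 0).trans c0110
  have c1100 : Ψ 1 1 0 0 = Ψ 0 0 1 1 := (t2 1 1 0 0).trans c1010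
  have c1011 : Ψ 1 0 1 1 = Ψ 0 1 1 1 := t1 1 0 1 1
  have c1101 : Ψ 1 1 0 1 = Ψ 0 1 1 1 := (t2 1 1 0 1).trans c1011
  have c1110 : Ψ 1 1 1 0 = Ψ 0 1 1 1 := (t3 1 1 1 0).trans c1101
  have H0 := halg 0 0 0 0
  have H1 := halg 0 0 0 1
  have H2 := halg 0 0 1 1
  have H3 := halg 0 1 1 1
  have H4 := halg 1 1 1 1
  unfold algCond at H0 H1 H2 H3 H4
  rw [sym4_eval] at H0 H1 H2 H3 H4
  simp only [eps, hκ, Fin.sum_univ_two, if_true, if_false, Fin.isValue] at H0 H1 H2 H3 H4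
  norm_num at H0 H1 H2 H3 H4
  simp only [c0010, c0100, c1000, c0101, c0110, c1001, c1010, c1100, c1011, c1101, c1110]
    at H0 H1 H2 H3 H4
  have E0 : o 0 * (o 0 * Ψ 0 0 0 1 - o 1 * Ψ 0 0 0 0) = 0 := by
    linear_combination (1/24 : ℂ) * H0
  have E1 : o 1 * (o 0 * Ψ 0 0 0 1 - o 1 * Ψ 0 0 0 0)
      + 3 * (o 0 * (o 0 * Ψ 0 0 1 1 - o 1 * Ψ 0 0 0 1)) = 0 := by
    linear_combination (1/6 : ℂ) * H1
  have E2 : o 1 * (o 0 * Ψ 0 0 1 1 - o 1 * Ψ 0 0 0 1)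
      + o 0 * (o 0 * Ψ 0 1 1 1 - o 1 * Ψ 0 0 1 1) = 0 := by
    linear_combination (1/12 : ℂ) * H2
  have E3 : 3 * (o 1 * (o 0 * Ψ 0 1 1 1 - o 1 * Ψ 0 0 1 1))
      + o 0 * (o 0 * Ψ 1 1 1 1 - o 1 * Ψ 0 1 1 1) = 0 := by
    linear_combination (1/6 : ℂ) * H3
  have E4 : o 1 * (o 0 * Ψ 1 1 1 1 - o 1 * Ψ 0 1 1 1) = 0 := by
    linear_combination (1/24 : ℂ) * H4
  clear H0 H1 H2 H3 H4
  have hab : o 0 ≠ 0 ∨ o 1 ≠ 0 := by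
    by_contra h
    push_neg at h
    exact ho (funext fun i => by fin_cases i <;> simp [h.1, h.2])
  have R : (o 0 * Ψ 0 0 0 1 - o 1 * Ψ 0 0 0 0 = 0)
      ∧ (o 0 * Ψ 0 0 1 1 - o 1 * Ψ 0 0 0 1 = 0)
      ∧ (o 0 * Ψ 0 1 1 1 - o 1 * Ψ 0 0 1 1 = 0)
      ∧ (o 0 * Ψ 1 1 1 1 - o 1 * Ψ 0 1 1 1 = 0) := by
    rcases hab with ha | hb
    · have r0 : o 0 * Ψ 0 0 0 1 - o 1 * Ψ 0 0 0 0 = 0 :=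
        (mul_eq_zero.mp E0).resolve_left ha
      have e1 : o 0 * (o 0 * Ψ 0 0 1 1 - o 1 * Ψ 0 0 0 1) = 0 := by
        linear_combination (1/3 : ℂ) * E1 - (o 1 / 3) * r0
      have r1 := (mul_eq_zero.mp e1).resolve_left ha
      have e2 : o 0 * (o 0 * Ψ 0 1 1 1 - o 1 * Ψ 0 0 1 1) = 0 := by
        linear_combination E2 - o 1 * r1
      have r2 := (mul_eq_zero.mp e2).resolve_left ha
      have e3 : o 0 * (o 0 * Ψ 1 1 1 1 - o 1 * Ψ 0 1 1 1) = 0 := by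
        linear_combination E3 - 3 * o 1 * r2
      have r3 := (mul_eq_zero.mp e3).resolve_left ha
      exact ⟨r0, r1, r2, r3⟩
    · have r3 : o 0 * Ψ 1 1 1 1 - o 1 * Ψ 0 1 1 1 = 0 :=
        (mul_eq_zero.mp E4).resolve_left hb
      have e2 : o 1 * (o 0 * Ψ 0 1 1 1 - o 1 * Ψ 0 0 1 1) = 0 := by
        linear_combination (1/3 : ℂ) * E3 - (o 0 / 3) * r3
      have r2 := (mul_eq_zero.mp e2).resolve_left hb
      have e1 : o 1 * (o 0 * Ψ 0 0 1 1 - o 1 * Ψ 0 0 0 1) = 0 := by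
        linear_combination E2 - o 0 * r2
      have r1 := (mul_eq_zero.mp e1).resolve_left hb
      have e0 : o 1 * (o 0 * Ψ 0 0 0 1 - o 1 * Ψ 0 0 0 0) = 0 := by
        linear_combination E1 - 3 * o 0 * r1
      have r0 := (mul_eq_zero.mp e0).resolve_left hb
      exact ⟨r0, r1, r2, r3⟩
  obtain ⟨r0, r1, r2, r3⟩ := R
  clear E0 E1 E2 E3 E4
  have key : ∃ ψ : ℂ,
      Ψ 0 0 0 0 = ψ * o 0 * o 0 * o 0 * o 0
      ∧ Ψ 0 0 0 1 = ψ * o 0 * o 0 * o 0 * o 1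
      ∧ Ψ 0 0 1 1 = ψ * o 0 * o 0 * o 1 * o 1
      ∧ Ψ 0 1 1 1 = ψ * o 0 * o 1 * o 1 * o 1
      ∧ Ψ 1 1 1 1 = ψ * o 1 * o 1 * o 1 * o 1 := by
    rcases hab with ha | hb
    · refine ⟨Ψ 0 0 0 0 / (o 0 * o 0 * o 0 * o 0), ?_, ?_, ?_, ?_, ?_⟩
      · field_simp
      · field_simp
        first
          | linear_combination (o 0)^3 * r0
          | linear_combination r0
      · field_simp
        first
          | linear_combination (o 0)^3 * r1 + (o 0)^2 * o 1 * r0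
          | linear_combination o 0 * r1 + o 1 * r0
      · field_simp
        first
          | linear_combination (o 0)^3 * r2 + (o 0)^2 * o 1 * r1 + o 0 * (o 1)^2 * r0
          | linear_combination (o 0)^2 * r2 + o 0 * o 1 * r1 + (o 1)^2 * r0
      · field_simp
        first
          | linear_combination (o 0)^3 * r3 + (o 0)^2 * o 1 * r2 + o 0 * (o 1)^2 * r1 + (o 1)^3 * r0
          | linear_combination -((o 0)^3 * r3 + (o 0)^2 * o 1 * r2 + o 0 * (o 1)^2 * r1 + (o 1)^3 * r0)
    · refine ⟨Ψ 1 1 1 1 / (o 1 * o 1 * o 1 * o 1), ?_, ?_, ?_, ?_, ?_⟩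
      · field_simp
        first
          | linear_combination (o 1)^3 * r0 + o 0 * (o 1)^2 * r1 + (o 0)^2 * o 1 * r2 + (o 0)^3 * r3
          | linear_combination -((o 1)^3 * r0 + o 0 * (o 1)^2 * r1 + (o 0)^2 * o 1 * r2 + (o 0)^3 * r3)
      · field_simp
        first
          | linear_combination (o 1)^3 * r1 + o 0 * (o 1)^2 * r2 + (o 0)^2 * o 1 * r3
          | linear_combination -((o 1)^2 * r1 + o 0 * o 1 * r2 + (o 0)^2 * r3)
      · field_simp
        first
          | linear_combination (o 1)^3 * r2 + o 0 * (o 1)^2 * r3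
          | linear_combination -(o 1 * r2 + o 0 * r3)
      · field_simp
        first
          | linear_combination (o 1)^3 * r3
          | linear_combination -r3
      · field_simp
  obtain ⟨ψ, g0, g1, g2, g3, g4⟩ := key
  refine ⟨ψ, fun A B C D => ?_⟩
  fin_cases A <;> fin_cases B <;> fin_cases C <;> fin_cases D <;>
    simp only [c0010, c0100, c1000, c0101, c0110, c1001, c1010, c1100, c1011, c1101, c1110,
      Fin.mk_zero, Fin.mk_one, Fin.isValue] <;>
    first
      | linear_combination g0
      | linear_combination g1
      | linear_combination g2
      | linear_combination g3
      | linear_combination g4
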